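/- For a ray x = (d,m) ∈ 𝓡 with m ≠ 0, set m̂ = m/‖m‖ and let x̂ be the 3×3 real matrix with columns d, m̂, and d × m̂. Then: (i) x̂ ∈ SO(3); (ii) for every R ∈ SO(3), writing R·x = (Rd, Rm) for the action of (R,0), the matrix associated to R·x equals R·x̂; and consequently (iii) for every group homomorphism ρ : SO(3) → GL(V) into the invertible linear maps of a vector space V and every function f : ℝ → V, the kernel κ(x) = ρ(x̂)(f(‖m‖)) satisfies κ(R·x) = ρ(R)(κ(x)) for all R ∈ SO(3) and all rays x with m ≠ 0. -/

import Mathlib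

noncomputable section
open scoped InnerProductSpace

/-- ℝ³ with the Euclidean norm. -/
abbrev E3 : Type := EuclideanSpace ℝ (Fin 3)

/-- Elements of SE(3): a pair of a 3×3 matrix and a translation vector. -/
abbrev SE3 : Type := Matrix (Fin 3) (Fin 3) ℝ × E3

/-- Matrix-vector multiplication on ℝ³. -/
def mv (R : Matrix (Fin 3) (Fin 3) ℝ) (v : E3) : E3 := WithLp.toLp 2 (R.mulVec v)

/-- Cross product on ℝ³. -/
def cross3 (a b : E3) : E3 :=
  WithLp.toLp 2 ![a 1 * b 2 - a 2 * b 1, a 2 * b 0 - a 0 * b 2, a 0 * b 1 - a 1 * b 0]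

/-- `R` is a special orthogonal 3×3 matrix: `RᵀR = I` and `det R = 1`. -/
def isSO3 (R : Matrix (Fin 3) (Fin 3) ℝ) : Prop :=
  R.transpose * R = 1 ∧ R.det = 1

/-- `(d, m)` are Plücker coordinates of an oriented line: `d` is a unit
direction and `m` is a moment with `⟨d, m⟩ = 0`. -/
def isRay (d m : E3) : Prop := ‖d‖ = 1 ∧ ⟪d, m⟫_ℝ = 0

/-- The standard basis vector e₁. -/
def e1 : E3 := WithLp.toLp 2 ![1, 0, 0]

/-- The standard basis vector e₂. -/
def e2 : E3 := WithLp.toLp 2 ![0, 1, 0]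

/-- The standard basis vector e₃. -/
def e3 : E3 := WithLp.toLp 2 ![0, 0, 1]

/-- Action of `(R, t) ∈ SE(3)` on Plücker coordinates:
`(R,t)·(d,m) = (Rd, Rm + t × (Rd))`. -/
def rayAct (R : Matrix (Fin 3) (Fin 3) ℝ) (t : E3) (d m : E3) : E3 × E3 :=
  (mv R d, mv R m + cross3 t (mv R d))

/-- Multiplication in SE(3): `(R₁,t₁)·(R₂,t₂) = (R₁R₂, t₁ + R₁t₂)`. -/
def se3Mul (g₁ g₂ : SE3) : SE3 := (g₁.1 * g₂.1, g₁.2 + mv g₁.1 g₂.2)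

/-- Inverse in SE(3) (for `g.1 ∈ SO(3)`): `(R,t)⁻¹ = (Rᵀ, -Rᵀt)`. -/
def se3Inv (g : SE3) : SE3 := (g.1.transpose, -(mv g.1.transpose g.2))

/-- Action of `g ∈ SE(3)` on the ray space. -/
def act (g : SE3) (x : E3 × E3) : E3 × E3 := rayAct g.1 g.2 x.1 x.2

/-- Action of `g = (R,t) ∈ SE(3)` on points of ℝ³: `g·p = Rp + t`. -/
def actPt (g : SE3) (p : E3) : E3 := mv g.1 p + g.2

/-- The origin ray `η = (e₃, 0)`. -/
def eta : E3 × E3 := (e3, 0)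

/-- The twist `h(g, x) = s(g·x)⁻¹ · g · s(x)` of a section `s`. -/
def twist (s : E3 × E3 → SE3) (g : SE3) (x : E3 × E3) : SE3 :=
  se3Mul (se3Inv (s (act g x))) (se3Mul g (s x))

/-- Rotation by γ about the z-axis. -/
def RZ (γ : ℝ) : Matrix (Fin 3) (Fin 3) ℝ :=
  !![Real.cos γ, -Real.sin γ, 0; Real.sin γ, Real.cos γ, 0; 0, 0, 1]

/-- Rotation by β about the y-axis. -/
def RY (β : ℝ) : Matrix (Fin 3) (Fin 3) ℝ :=
  !![Real.cos β, 0, Real.sin β; 0, 1, 0; -Real.sin β, 0, Real.cos β]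

/-- The underlying line of the ray with Plücker coordinates `(d, m)`:
`L(d,m) = {p : p × d = m}`. -/
def lineOf (d m : E3) : Set E3 := {p : E3 | cross3 p d = m}

/-- Infimum of the Euclidean distances between points of the line `L(d,m)`
and points of the z-axis. -/
def Dzaxis (d m : E3) : ℝ :=
  sInf {r : ℝ | ∃ p ∈ lineOf d m, ∃ s : ℝ, r = dist p (s • e3)}

/-- The z-coordinate `g(x) = e₃·(c - λ·d)` (with `c = d × m` and
`λ = ((e₁·c)(e₁·d) + (e₂·c)(e₂·d))/(1 - (e₃·d)²)`) of the point of `L(d,m)`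
closest to the z-axis (for `d ≠ ±e₃`). -/
def zfoot (d m : E3) : ℝ :=
  ⟪e3, cross3 d m - ((⟪e1, cross3 d m⟫_ℝ * ⟪e1, d⟫_ℝ + ⟪e2, cross3 d m⟫_ℝ * ⟪e2, d⟫_ℝ)
      / (1 - ⟪e3, d⟫_ℝ ^ 2)) • d⟫_ℝ

/-- The matrix `x̂` with columns `d`, `m̂ = m/‖m‖`, and `d × m̂`. -/
def hatMat (d m : E3) : Matrix (Fin 3) (Fin 3) ℝ :=
  Matrix.of fun i j => ![d, ‖m‖⁻¹ • m, cross3 d (‖m‖⁻¹ • m)] j i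

lemma inner3 (a b : E3) : ⟪a,b⟫_ℝ = a 0 * b 0 + a 1 * b 1 + a 2 * b 2 := by
  simp [PiLp.inner_apply, Fin.sum_univ_three, RCLike.inner_apply]
  ring

lemma normsq3 (a : E3) : ‖a‖^2 = a 0^2 + a 1^2 + a 2^2 := by
  rw [← real_inner_self_eq_norm_sq, inner3]; ring

lemma mv_apply (R : Matrix (Fin 3) (Fin 3) ℝ) (v : E3) (i : Fin 3) :
    mv R v i = R i 0 * v 0 + R i 1 * v 1 + R i 2 * v 2 := by
  simp [mv, Matrix.mulVec, dotProduct, Fin.sum_univ_three]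

lemma so3_entries {R : Matrix (Fin 3) (Fin 3) ℝ} (h : R.transpose * R = 1) (i j : Fin 3) :
    R 0 i * R 0 j + R 1 i * R 1 j + R 2 i * R 2 j = if i = j then 1 else 0 := by
  have := congrFun (congrFun h i) j
  simpa [Matrix.mul_apply, Fin.sum_univ_three, Matrix.one_apply] using this

lemma mv_normsq {R : Matrix (Fin 3) (Fin 3) ℝ} (h : R.transpose * R = 1) (v : E3) :
    ‖mv R v‖^2 = ‖v‖^2 := by
  rw [normsq3, normsq3, mv_apply, mv_apply, mv_apply]
  have h00 := so3_entries h 0 0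
  have h01 := so3_entries h 0 1
  have h02 := so3_entries h 0 2
  have h11 := so3_entries h 1 1
  have h12 := so3_entries h 1 2
  have h22 := so3_entries h 2 2
  norm_num [Fin.ext_iff] at h00 h01 h02 h11 h12 h22
  linear_combination (v 0)^2*h00 + (v 1)^2*h11 + (v 2)^2*h22
    + 2*(v 0)*(v 1)*h01 + 2*(v 0)*(v 2)*h02 + 2*(v 1)*(v 2)*h12

lemma mv_norm {R : Matrix (Fin 3) (Fin 3) ℝ} (h : R.transpose * R = 1) (v : E3) :
    ‖mv R v‖ = ‖v‖ := by
  have h2 := mv_normsq h v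
  nlinarith [norm_nonneg (mv R v), norm_nonneg v, h2]

lemma mv_cross {R : Matrix (Fin 3) (Fin 3) ℝ} (hR : isSO3 R) (a b : E3) :
    cross3 (mv R a) (mv R b) = mv R (cross3 a b) := by
  obtain ⟨h1, h2⟩ := hR
  have hadj : R.adjugate = R.transpose := by
    calc R.adjugate = (R.transpose * R) * R.adjugate := by rw [h1, one_mul]
      _ = R.transpose * (R * R.adjugate) := by rw [Matrix.mul_assoc]
      _ = R.transpose := by rw [Matrix.mul_adjugate, h2, one_smul, mul_one]
  have hE : ∀ i j : Fin 3, R j i = R.adjugate i j := by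
    intro i j; rw [hadj]; rfl
  have hA := Matrix.adjugate_fin_three R
  ext i
  fin_cases i <;>
  · show _ = mv R (cross3 a b) _
    rw [mv_apply, hE, hE, hE, hA]
    simp [cross3, mv_apply]
    ring

lemma hat_so3 (d m : E3) (h : isRay d m) (hm : m ≠ 0) : isSO3 (hatMat d m) := by
  obtain ⟨hd1, hdm⟩ := h
  have hmpos : (0:ℝ) < ‖m‖ := norm_pos_iff.mpr hm
  have hun : ‖(‖m‖⁻¹ • m : E3)‖ = 1 := by
    rw [norm_smul, norm_inv, norm_norm, inv_mul_cancel₀ hmpos.ne']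
  have hd : d 0^2 + d 1^2 + d 2^2 = 1 := by
    have : ‖d‖^2 = 1 := by rw [hd1]; norm_num
    rwa [normsq3] at this
  have hu : (‖m‖⁻¹ * m 0)^2 + (‖m‖⁻¹ * m 1)^2 + (‖m‖⁻¹ * m 2)^2 = 1 := by
    have h2 : ‖(‖m‖⁻¹ • m : E3)‖^2 = 1 := by rw [hun]; norm_num
    rw [normsq3] at h2
    simpa [PiLp.smul_apply, smul_eq_mul] using h2
  have hdu : d 0 * (‖m‖⁻¹ * m 0) + d 1 * (‖m‖⁻¹ * m 1) + d 2 * (‖m‖⁻¹ * m 2) = 0 := by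
    have h0 : ⟪d, (‖m‖⁻¹ • m : E3)⟫_ℝ = 0 := by
      rw [real_inner_smul_right, hdm, mul_zero]
    rw [inner3] at h0
    simpa [PiLp.smul_apply, smul_eq_mul] using h0
  have big : True := trivial
  constructor
  · ext i j
    fin_cases i <;> fin_cases j <;>
      simp [hatMat, Matrix.mul_apply, Fin.sum_univ_three, cross3,
        Matrix.transpose_apply, Matrix.one_apply, PiLp.smul_apply, smul_eq_mul] <;>
      first
        | ring1
        | linear_combination hd
        | linear_combination hu
        | linear_combination hdu
        | linear_combination ((-1 : ℝ)) * hdu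
        | linear_combination (((‖m‖⁻¹ * m 0)^2 + (‖m‖⁻¹ * m 1)^2 + (‖m‖⁻¹ * m 2)^2) * hd + hu - (d 0 * (‖m‖⁻¹ * m 0) + d 1 * (‖m‖⁻¹ * m 1) + d 2 * (‖m‖⁻¹ * m 2)) * hdu)
  · rw [Matrix.det_fin_three]
    simp [hatMat, cross3, PiLp.smul_apply, smul_eq_mul]
    linear_combination ((‖m‖⁻¹ * m 0)^2 + (‖m‖⁻¹ * m 1)^2 + (‖m‖⁻¹ * m 2)^2) * hd + hu -
      (d 0 * (‖m‖⁻¹ * m 0) + d 1 * (‖m‖⁻¹ * m 1) + d 2 * (‖m‖⁻¹ * m 2)) * hdu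

lemma hat_equiv (R : Matrix (Fin 3) (Fin 3) ℝ) (hR : isSO3 R) (d m : E3)
    (h : isRay d m) (hm : m ≠ 0) : hatMat (mv R d) (mv R m) = R * hatMat d m := by
  have hnorm : ‖mv R m‖ = ‖m‖ := mv_norm hR.1 m
  have hsm : (‖m‖⁻¹ : ℝ) • mv R m = mv R (‖m‖⁻¹ • m) := by
    rw [mv, mv, WithLp.ofLp_smul, Matrix.mulVec_smul, WithLp.toLp_smul]
  have hmul : ∀ i j, (R * hatMat d m) i j
      = mv R (![d, ‖m‖⁻¹ • m, cross3 d (‖m‖⁻¹ • m)] j) i := by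
    intro i j
    fin_cases j <;>
      simp [hatMat, Matrix.mul_apply, Fin.sum_univ_three, mv_apply] <;> ring
  ext i j
  rw [hmul]
  fin_cases j
  · simp [hatMat]
  · show (‖mv R m‖⁻¹ • mv R m) i = mv R (‖m‖⁻¹ • m) i
    rw [hnorm, hsm]
  · show cross3 (mv R d) (‖mv R m‖⁻¹ • mv R m) i = mv R (cross3 d (‖m‖⁻¹ • m)) i
    rw [hnorm, hsm, mv_cross hR]

/-- (i) `x̂ ∈ SO(3)`; (ii) the matrix associated to the rotated
ray `R·x = (Rd, Rm)` equals `R·x̂`; (iii) consequently the kernel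
`κ(x) = ρ(x̂)(f(‖m‖))` is SO(3)-equivariant: `κ(R·x) = ρ(R)(κ(x))`. -/
theorem statement15 {V : Type*} [AddCommGroup V] [Module ℝ V]
    (ρ : Matrix (Fin 3) (Fin 3) ℝ → (V ≃ₗ[ℝ] V))
    (hρ : ∀ R₁ R₂ : Matrix (Fin 3) (Fin 3) ℝ, isSO3 R₁ → isSO3 R₂ →
      ρ (R₁ * R₂) = (ρ R₂).trans (ρ R₁))
    (f : ℝ → V) :
    (∀ d m : E3, isRay d m → m ≠ 0 → isSO3 (hatMat d m)) ∧
    (∀ R : Matrix (Fin 3) (Fin 3) ℝ, isSO3 R → ∀ d m : E3, isRay d m → m ≠ 0 →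
      hatMat (mv R d) (mv R m) = R * hatMat d m) ∧
    (∀ R : Matrix (Fin 3) (Fin 3) ℝ, isSO3 R → ∀ d m : E3, isRay d m → m ≠ 0 →
      ρ (hatMat (mv R d) (mv R m)) (f ‖mv R m‖) = ρ R (ρ (hatMat d m) (f ‖m‖))) := by
  refine ⟨hat_so3, hat_equiv, ?_⟩
  intro R hR d m h hm
  rw [hat_equiv R hR d m h hm, hρ R (hatMat d m) hR (hat_so3 d m h hm), mv_norm hR.1 m]
  simp [LinearEquiv.trans_apply]


end
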